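/- Let (Ω, P) be a probability space, let M ≥ 1, and let X_1, …, X_M be independent random variables each taking values in {−1, 1}. Set p̄ = (1/M)·∑_{m=1}^{M} P(X_m = 1). If p̄ < 1/2, then P(∑_{m=1}^{M} X_m ≥ 0) ≤ (4·p̄·(1 − p̄))^{M/2}. -/

import Mathlib

open MeasureTheory ProbabilityTheory

lemma pm_mgf {Ω : Type*} [MeasurableSpace Ω] (P : Measure Ω) [IsProbabilityMeasure P]
    (X : Ω → ℝ) (hX : Measurable X) (hval : ∀ ω, X ω = 1 ∨ X ω = -1) (t : ℝ) :
    Integrable (fun ω => Real.exp (t * X ω)) P ∧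
      mgf X P t = (P {ω | X ω = 1}).toReal * Real.exp t
        + (1 - (P {ω | X ω = 1}).toReal) * Real.exp (-t) := by
  set A : Set Ω := {ω | X ω = 1} with hA
  have hAm : MeasurableSet A := hX (measurableSet_singleton 1)
  have hfeq : (fun ω => Real.exp (t * X ω))
      = fun ω => A.indicator (fun _ => Real.exp t - Real.exp (-t)) ω + Real.exp (-t) := by
    funext ω
    rcases hval ω with h | h
    · have : ω ∈ A := h
      simp [Set.indicator_of_mem this, h]
    · have : ω ∉ A := by simp [hA, h]; norm_num
      simp [Set.indicator_of_notMem this, h]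
  have hint : Integrable (fun ω => Real.exp (t * X ω)) P := by
    rw [hfeq]
    exact ((integrable_const _).indicator hAm).add (integrable_const _)
  refine ⟨hint, ?_⟩
  rw [mgf, hfeq, integral_add ((integrable_const _).indicator hAm) (integrable_const _),
    integral_indicator_const _ hAm, integral_const]
  simp [smul_eq_mul]
  simp only [measureReal_def]
  ring

theorem stmt_0 {Ω : Type*} [MeasurableSpace Ω] (P : Measure Ω) [IsProbabilityMeasure P]
    (M : ℕ) (hM : 1 ≤ M)
    (X : Fin M → Ω → ℝ)
    (hmeas : ∀ m, Measurable (X m))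
    (hindep : iIndepFun X P)
    (hval : ∀ m ω, X m ω = 1 ∨ X m ω = -1)
    (pbar : ℝ)
    (hpbar : pbar = (1 / M) * ∑ m, (P {ω | X m ω = 1}).toReal)
    (hlt : pbar < 1 / 2) :
    (P {ω | 0 ≤ ∑ m, X m ω}).toReal ≤ (4 * pbar * (1 - pbar)) ^ ((M : ℝ) / 2) := by
  have hMpos : (0 : ℝ) < M := by exact_mod_cast hM
  set p : Fin M → ℝ := fun m => (P {ω | X m ω = 1}).toReal with hp
  have hpm0 : ∀ m, 0 ≤ p m := fun m => ENNReal.toReal_nonneg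
  have hpm1 : ∀ m, p m ≤ 1 := fun m => by
    have := prob_le_one (μ := P) (s := {ω | X m ω = 1})
    exact ENNReal.toReal_le_of_le_ofReal one_pos.le (by simpa using this)
  have hsum : ∑ m, p m = M * pbar := by
    rw [hpbar]; field_simp
  have hpbar0 : 0 ≤ pbar := by
    rw [hpbar]
    positivity
  rcases eq_or_lt_of_le hpbar0 with hz | hz
  · -- degenerate case pbar = 0
    have hsum0 : ∑ m, p m = 0 := by rw [hsum, ← hz]; ring
    have hpm : ∀ m, p m = 0 := by
      intro m
      have := (Finset.sum_eq_zero_iff_of_nonneg (fun i _ => hpm0 i)).mp hsum0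
      exact this m (Finset.mem_univ m)
    have hPm : ∀ m, P {ω | X m ω = 1} = 0 := by
      intro m
      have := hpm m
      rw [hp] at this
      exact (ENNReal.toReal_eq_zero_iff _).mp this |>.resolve_right (measure_ne_top P _)
    have hsub : {ω | 0 ≤ ∑ m, X m ω} ⊆ ⋃ m, {ω | X m ω = 1} := by
      intro ω hω
      by_contra hc
      simp only [Set.mem_iUnion, Set.mem_setOf_eq, not_exists] at hc
      have hall : ∀ m, X m ω = -1 := fun m => (hval m ω).resolve_left (hc m)
      have hs : ∑ m, X m ω = -M := by simp [hall]
      simp only [Set.mem_setOf_eq, hs] at hω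
      linarith
    have hLHS : P {ω | 0 ≤ ∑ m, X m ω} = 0 := by
      refine le_antisymm ?_ zero_le
      calc P {ω | 0 ≤ ∑ m, X m ω} ≤ P (⋃ m, {ω | X m ω = 1}) := measure_mono hsub
        _ ≤ ∑' m, P {ω | X m ω = 1} := measure_iUnion_le _
        _ = ∑ m, P {ω | X m ω = 1} := tsum_fintype _
        _ = 0 := by simp [hPm]
    rw [hLHS, ← hz]
    simp only [ENNReal.toReal_zero, mul_zero, zero_mul, sub_zero]
    rw [Real.zero_rpow (by positivity)]
  · -- main case 0 < pbar
    set q : ℝ := 1 - pbar with hq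
    have hq0 : 0 < q := by simp [hq]; linarith
    have hqp1 : 1 ≤ q / pbar := by
      rw [le_div_iff₀ hz]
      linarith
    set t : ℝ := Real.log (Real.sqrt (q / pbar)) with ht
    have hsqpos : 0 < Real.sqrt (q / pbar) := Real.sqrt_pos.mpr (by positivity)
    have hexpt : Real.exp t = Real.sqrt (q / pbar) := Real.exp_log hsqpos
    have ht0 : 0 ≤ t := Real.log_nonneg (by
      rw [show (1:ℝ) = Real.sqrt 1 by simp]
      exact Real.sqrt_le_sqrt hqp1)
    have hexpnt : Real.exp (-t) = Real.sqrt (pbar / q) := by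
      rw [Real.exp_neg, hexpt, ← Real.sqrt_inv, inv_div]
    -- per-coordinate mgf
    have hmgf : ∀ m, Integrable (fun ω => Real.exp (t * X m ω)) P ∧
        mgf (X m) P t = p m * Real.exp t + (1 - p m) * Real.exp (-t) :=
      fun m => pm_mgf P (X m) (hmeas m) (hval m) t
    set a : Fin M → ℝ := fun m => p m * Real.exp t + (1 - p m) * Real.exp (-t) with ha
    have ha0 : ∀ m, 0 ≤ a m := fun m =>
      add_nonneg (mul_nonneg (hpm0 m) (Real.exp_pos t).le)
        (mul_nonneg (by linarith [hpm1 m]) (Real.exp_pos (-t)).le)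
    -- Chernoff
    have hSint : Integrable (fun ω => Real.exp (t * (∑ m, X m) ω)) P :=
      hindep.integrable_exp_mul_sum hmeas (fun i _ => (hmgf i).1)
    have hchern : (P {ω | 0 ≤ ∑ m, X m ω}).toReal ≤ ∏ m, a m := by
      have h := measure_ge_le_exp_mul_mgf (X := ∑ m, X m) (μ := P) 0 ht0 hSint
      simp only [mul_zero, neg_zero, Real.exp_zero, one_mul] at h
      have hseteq : {ω | 0 ≤ ∑ m, X m ω} = {ω | 0 ≤ (∑ m, X m) ω} := by
        ext ω; simp [Finset.sum_apply]
      calc (P {ω | 0 ≤ ∑ m, X m ω}).toReal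
          = (P {ω | 0 ≤ (∑ m, X m) ω}).toReal := by rw [hseteq]
        _ ≤ mgf (∑ m, X m) P t := h
        _ = ∏ m, mgf (X m) P t := hindep.mgf_sum hmeas Finset.univ
        _ = ∏ m, a m := Finset.prod_congr rfl (fun m _ => (hmgf m).2)
    -- AM-GM
    set abar : ℝ := pbar * Real.exp t + q * Real.exp (-t) with habar
    have habar0 : 0 ≤ abar :=
      add_nonneg (mul_nonneg hpbar0 (Real.exp_pos t).le)
        (mul_nonneg hq0.le (Real.exp_pos (-t)).le)
    have hsuma : ∑ m, a m = M * abar := by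
      simp only [ha, habar]
      rw [Finset.sum_add_distrib, ← Finset.sum_mul, ← Finset.sum_mul, hsum,
        Finset.sum_sub_distrib, hsum]
      simp [Finset.card_univ]
      ring
    have hamgm : ∏ m, a m ≤ abar ^ (M : ℝ) := by
      have hgm : ∏ m, (a m) ^ ((M : ℝ)⁻¹) ≤ ∑ m, (M : ℝ)⁻¹ * a m := by
        refine Real.geom_mean_le_arith_mean_weighted Finset.univ (fun _ => (M : ℝ)⁻¹) a
          (fun i _ => by positivity) ?_ (fun i _ => ha0 i)
        simp only [Finset.sum_const, Finset.card_univ, Fintype.card_fin, nsmul_eq_mul]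
        field_simp
      have hsum' : ∑ m, (M : ℝ)⁻¹ * a m = abar := by
        rw [← Finset.mul_sum, hsuma]
        field_simp
      rw [hsum'] at hgm
      have hpow := Real.rpow_le_rpow (Finset.prod_nonneg fun i _ => Real.rpow_nonneg (ha0 i) _) hgm (le_of_lt hMpos)
      calc ∏ m, a m = (∏ m, (a m) ^ ((M : ℝ)⁻¹)) ^ (M : ℝ) := by
            rw [Real.finset_prod_rpow _ _ (fun i _ => ha0 i),
              ← Real.rpow_mul (Finset.prod_nonneg (fun i _ => ha0 i))]
            rw [inv_mul_cancel₀ (ne_of_gt hMpos), Real.rpow_one]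
        _ ≤ abar ^ (M : ℝ) := hpow
    -- compute abar
    have hsp : Real.sqrt pbar * Real.sqrt pbar = pbar := Real.mul_self_sqrt hz.le
    have hsq : Real.sqrt q * Real.sqrt q = q := Real.mul_self_sqrt hq0.le
    have hsp0 : 0 < Real.sqrt pbar := Real.sqrt_pos.mpr hz
    have hsq0 : 0 < Real.sqrt q := Real.sqrt_pos.mpr hq0
    have e1 : pbar * (Real.sqrt q / Real.sqrt pbar) = Real.sqrt pbar * Real.sqrt q := by
      rw [mul_div_assoc', div_eq_iff hsp0.ne']
      linear_combination (-Real.sqrt q) * hsp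
    have e2 : q * (Real.sqrt pbar / Real.sqrt q) = Real.sqrt pbar * Real.sqrt q := by
      rw [mul_div_assoc', div_eq_iff hsq0.ne']
      linear_combination (-Real.sqrt pbar) * hsq
    have habarval : abar = 2 * Real.sqrt (pbar * q) := by
      rw [habar, hexpt, hexpnt, Real.sqrt_div hq0.le, Real.sqrt_div hz.le,
        Real.sqrt_mul hz.le, e1, e2]
      ring
    -- final conversion
    have h4 : 4 * pbar * q = abar ^ (2 : ℕ) := by
      rw [habarval, sq]
      have hpq := Real.mul_self_sqrt (mul_nonneg hz.le hq0.le)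
      linear_combination (-4 : ℝ) * hpq
    have hfinal : abar ^ (M : ℝ) = (4 * pbar * q) ^ ((M : ℝ) / 2) := by
      rw [h4, ← Real.rpow_natCast abar 2, ← Real.rpow_mul habar0]
      congr 1
      push_cast
      ring
    calc (P {ω | 0 ≤ ∑ m, X m ω}).toReal ≤ ∏ m, a m := hchern
      _ ≤ abar ^ (M : ℝ) := hamgm
      _ = _ := hfinal
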